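/- Let Σ = {a_1, a_2, ..., a_σ} with 3 ≤ σ ≤ n, set k = ⌊n/(σ−1)⌋ − 1, and let x = a_2 a_1^k a_3 a_1^k a_4 a_1^k ⋯ a_σ a_1^k a_1^(n−(σ−1)(k+1)), a word of length n. Then for all 0 ≤ j ≤ k, 2 ≤ i ≤ σ and 3 ≤ l ≤ σ, the word a_i a_1^j a_l is a minimal absent word of x, except for the words a_i a_1^k a_(i+1) with 2 ≤ i < σ, which occur in x. -/

import Mathlib

/-- The observed frequency `f(w)`: the number of starting positions at which
the word `w` occurs in the word `x` (occurrences may overlap). -/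
def occ {α : Type*} [DecidableEq α] (x w : List α) : ℕ :=
  ((Finset.range (x.length + 1)).filter (fun i => (x.drop i).take w.length = w)).card

/-- The expected frequency `E(w)` of `w` in `x`:
`E(w) = f(w_p)·f(w_s)/f(w_i)` if `f(w_i) > 0`, and `E(w) = 0` otherwise,
where `w_p = w.dropLast` is the longest proper prefix of `w`,
`w_s = w.tail` is the longest proper suffix of `w`, and
`w_i = w.tail.dropLast` is the infix of `w` obtained by deleting its
first and last letters. -/
noncomputable def expFreq {α : Type*} [DecidableEq α] (x w : List α) : ℝ :=
  if 0 < occ x w.tail.dropLast then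
    ((occ x w.dropLast : ℝ) * (occ x w.tail : ℝ)) / (occ x w.tail.dropLast : ℝ)
  else 0

/-- The standard deviation `std(w) = (f(w) − E(w)) / max(√E(w), 1)`. -/
noncomputable def stdDev {α : Type*} [DecidableEq α] (x w : List α) : ℝ :=
  ((occ x w : ℝ) - expFreq x w) / max (Real.sqrt (expFreq x w)) 1

/-- `w` is a minimal absent word of `x`: `w` is absent from `x`
(`f(w) = 0`) and every proper factor of `w` occurs in `x`. -/
def IsMAW {α : Type*} [DecidableEq α] (x w : List α) : Prop :=
  occ x w = 0 ∧ ∀ v : List α, v <:+: w → v ≠ w → 0 < occ x v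

lemma occ_pos_iff {α : Type*} [DecidableEq α] (x w : List α) :
    0 < occ x w ↔ w <:+: x := by
  constructor
  · intro h
    rw [occ, Finset.card_pos] at h
    obtain ⟨i, hi⟩ := h
    rw [Finset.mem_filter] at hi
    rw [← hi.2]
    exact ((List.take_prefix _ _).isInfix).trans (List.drop_suffix i x).isInfix
  · rintro ⟨u, v, rfl⟩
    rw [occ, Finset.card_pos]
    refine ⟨u.length, Finset.mem_filter.2 ⟨Finset.mem_range.2 (by simp), ?_⟩⟩
    rw [List.append_assoc, List.drop_left, List.take_left]

lemma infix_tail_or_dropLast {α : Type*} {v w : List α} (h : v <:+: w) (hne : v ≠ w) :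
    v <:+: w.tail ∨ v <:+: w.dropLast := by
  obtain ⟨s, t, rfl⟩ := h
  cases s with
  | nil =>
    right
    have ht : t ≠ [] := by rintro rfl; simp at hne
    refine List.IsPrefix.isInfix ?_
    rw [List.dropLast_eq_take, List.prefix_take_iff]
    refine ⟨by simp, ?_⟩
    have : t.length ≠ 0 := fun h0 => ht (List.length_eq_zero_iff.1 h0)
    simp; omega
  | cons hd s' =>
    left
    exact ⟨s', t, by simp⟩

lemma block_infix {α : Type*} (B : ℕ → List α) {m t : ℕ} (h : t < m) :
    B t <:+: ((List.range m).map B).flatten :=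
  List.infix_of_mem_flatten (List.mem_map_of_mem (f := B) (List.mem_range.2 h))

lemma pair_infix {α : Type*} (B : ℕ → List α) {m t : ℕ} (h : t + 1 < m) :
    B t ++ B (t + 1) <:+: ((List.range m).map B).flatten := by
  have hm : m = t + 2 + (m - (t + 2)) := by omega
  rw [hm, List.range_add, List.map_append, List.flatten_append]
  refine List.IsInfix.trans ?_ (List.prefix_append _ _).isInfix
  rw [show t + 2 = t + 1 + 1 from rfl, List.range_succ, List.range_succ,
    List.map_append, List.map_append, List.flatten_append, List.flatten_append]
  simp only [List.map_cons, List.map_nil, List.flatten_cons, List.flatten_nil,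
    List.append_nil, List.append_assoc]
  exact (List.suffix_append _ _).isInfix

/-- Let `Σ = {a_1, …, a_σ}` with `3 ≤ σ ≤ n`, set `k = ⌊n/(σ−1)⌋ − 1`, and let
`x = a_2 a_1^k a_3 a_1^k ⋯ a_σ a_1^k a_1^(n−(σ−1)(k+1))`, a word of length `n`.
Then for all `0 ≤ j ≤ k`, `2 ≤ i ≤ σ` and `3 ≤ l ≤ σ`, the word `a_i a_1^j a_l`
is a minimal absent word of `x`, except for the words `a_i a_1^k a_(i+1)` with
`2 ≤ i < σ`, which occur in `x`. -/
theorem stmt_14 {α : Type*} [DecidableEq α] (σ n : ℕ) (hσ : 3 ≤ σ) (hσn : σ ≤ n)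
    (a : ℕ → α) (ha : Set.InjOn a (Set.Icc 1 σ)) :
    ∀ k x : _, k = n / (σ - 1) - 1 →
      x = ((List.range (σ - 1)).map (fun t => a (t + 2) :: List.replicate k (a 1))).flatten
            ++ List.replicate (n - (σ - 1) * (k + 1)) (a 1) →
    x.length = n ∧
    ∀ j ≤ k, ∀ i, 2 ≤ i → i ≤ σ → ∀ l, 3 ≤ l → l ≤ σ →
      if j = k ∧ l = i + 1 ∧ i < σ then
        0 < occ x (a i :: (List.replicate j (a 1) ++ [a l]))
      else
        IsMAW x (a i :: (List.replicate j (a 1) ++ [a l])) := by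
  intro k x hk hx
  have hσ1 : σ - 1 + 1 = σ := by omega
  have hdiv : 1 ≤ n / (σ - 1) := (Nat.one_le_div_iff (by omega)).2 (by omega)
  have hk1 : k + 1 = n / (σ - 1) := by omega
  have hle : (σ - 1) * (k + 1) ≤ n := by
    rw [hk1, mul_comm]; exact Nat.div_mul_le_self n (σ - 1)
  clear hk hdiv hk1
  set B : ℕ → List α := fun t => a (t + 2) :: List.replicate k (a 1) with hB
  set c : ℕ → α := fun p =>
    if p % (k + 1) = 0 ∧ p < (σ - 1) * (k + 1) then a (p / (k + 1) + 2) else a 1 with hc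
  -- the flatten part is map c over an initial range
  have hflat : ∀ m, m ≤ σ - 1 →
      ((List.range m).map B).flatten = (List.range (m * (k + 1))).map c := by
    intro m
    induction m with
    | zero => simp
    | succ m ih =>
      intro hm
      rw [List.range_succ, List.map_append, List.flatten_append, ih (by omega)]
      rw [show (m + 1) * (k + 1) = m * (k + 1) + (k + 1) by ring, List.range_add,
        List.map_append]
      congr 1
      simp only [List.map_cons, List.map_nil, List.flatten_cons, List.flatten_nil,
        List.append_nil, List.map_map]
      rw [List.range_succ_eq_map, List.map_cons, List.map_map, hB]
      simp only [Function.comp]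
      congr 1
      · simp only [hc, Nat.add_zero]
        rw [if_pos ⟨Nat.mul_mod_left m (k + 1), by
          exact (Nat.mul_lt_mul_right (by omega)).2 (by omega)⟩]
        rw [Nat.mul_div_cancel m (by omega : 0 < k + 1)]
      · symm
        rw [List.eq_replicate_iff]
        refine ⟨by simp, ?_⟩
        intro b hb
        simp only [List.mem_map, List.mem_range, Function.comp] at hb
        obtain ⟨r, hr, hb⟩ := hb
        rw [← hb]
        simp only [hc]
        have hmod : (m * (k + 1) + Nat.succ r) % (k + 1) = r + 1 := by
          rw [Nat.add_mod, Nat.mul_mod_left]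
          simp [Nat.mod_eq_of_lt (by omega : r + 1 < k + 1)]
        rw [if_neg (by rw [hmod]; omega)]
  -- x is map c over range n
  have hxc : x = (List.range n).map c := by
    rw [hx, hflat (σ - 1) le_rfl,
      show n = (σ - 1) * (k + 1) + (n - (σ - 1) * (k + 1)) by omega,
      List.range_add, List.map_append, List.map_map]
    congr 1
    symm
    rw [List.eq_replicate_iff]
    refine ⟨by simp, ?_⟩
    intro b hb
    simp only [List.mem_map, List.mem_range, Function.comp] at hb
    obtain ⟨r, hr, hb⟩ := hb
    rw [← hb]
    simp only [hc]
    rw [if_neg (by omega)]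
  have hxl : x.length = n := by rw [hxc]; simp
  refine ⟨hxl, ?_⟩
  intro j hj i hi2 hiσ l hl3 hlσ
  -- basic infix facts
  have hBlk : ∀ t, t < σ - 1 → B t <:+: x := by
    intro t ht
    rw [hx]
    exact (block_infix B ht).trans (List.prefix_append _ _).isInfix
  have hPair : ∀ t, t + 1 < σ - 1 → B t ++ B (t + 1) <:+: x := by
    intro t ht
    rw [hx]
    exact (pair_infix B ht).trans (List.prefix_append _ _).isInfix
  -- occurrence of a_i a_1^k a_{i+1}
  have hOccExc : ∀ i', 2 ≤ i' → i' < σ →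
      (a i' :: (List.replicate k (a 1) ++ [a (i' + 1)])) <:+: x := by
    intro i' h2 hlt
    have hP := hPair (i' - 2) (by omega)
    rw [hB] at hP
    simp only at hP
    rw [show i' - 2 + 2 = i' by omega, show i' - 2 + 1 + 2 = i' + 1 by omega] at hP
    refine List.IsInfix.trans ?_ hP
    refine ⟨[], List.replicate k (a 1), ?_⟩
    simp
  -- decoding letters
  have hdecode : ∀ p m, 2 ≤ m → m ≤ σ → c p = a m →
      p = (m - 2) * (k + 1) ∧ p < (σ - 1) * (k + 1) := by
    intro p m hm2 hmσ hcp
    simp only [hc] at hcp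
    by_cases hcnd : p % (k + 1) = 0 ∧ p < (σ - 1) * (k + 1)
    · rw [if_pos hcnd] at hcp
      have hq : p / (k + 1) < σ - 1 := (Nat.div_lt_iff_lt_mul (by omega)).2 hcnd.2
      have hmem1 : p / (k + 1) + 2 ∈ Set.Icc 1 σ := Set.mem_Icc.2 ⟨Nat.succ_le_succ (Nat.zero_le _), by omega⟩
      have hmem2 : m ∈ Set.Icc 1 σ := Set.mem_Icc.2 ⟨by omega, hmσ⟩
      have heq : p / (k + 1) + 2 = m := ha hmem1 hmem2 hcp
      have hp : (k + 1) * (p / (k + 1)) = p := by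
        have := Nat.div_add_mod p (k + 1); omega
      refine ⟨?_, hcnd.2⟩
      rw [show m - 2 = p / (k + 1) by omega, mul_comm]
      exact hp.symm
    · rw [if_neg hcnd] at hcp
      have hmem1 : (1 : ℕ) ∈ Set.Icc 1 σ := Set.mem_Icc.2 ⟨le_rfl, by omega⟩
      have hmem2 : m ∈ Set.Icc 1 σ := Set.mem_Icc.2 ⟨by omega, hmσ⟩
      exact absurd (ha hmem1 hmem2 hcp).symm (by omega)
  have getx : ∀ p (hp : p < n), x[p]'(by omega) = c p := by
    intro p hp
    simp only [hxc, List.getElem_map, List.getElem_range]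
  by_cases hcond : j = k ∧ l = i + 1 ∧ i < σ
  · rw [if_pos hcond]
    obtain ⟨rfl, rfl, hiltσ⟩ := hcond
    exact (occ_pos_iff x _).2 (hOccExc i hi2 hiltσ)
  · rw [if_neg hcond]
    have hrep : List.replicate (k - j) (a 1) ++ List.replicate j (a 1)
        = List.replicate k (a 1) := by
      rw [← List.replicate_add]; congr 1; omega
    have hrep' : List.replicate j (a 1) ++ List.replicate (k - j) (a 1)
        = List.replicate k (a 1) := by
      rw [← List.replicate_add]; congr 1; omega
    constructor
    · -- absence
      by_contra habs
      obtain ⟨u, v, huv⟩ := (occ_pos_iff x _).1 (Nat.pos_of_ne_zero habs)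
      have hlen2 : u.length + (j + 2) + v.length = n := by
        have := congrArg List.length huv
        simp [hxl] at this
        omega
      have hx2 : x = u ++ ((a i :: (List.replicate j (a 1) ++ [a l])) ++ v) := by
        rw [← huv, List.append_assoc]
      have h1 : x[u.length]'(by omega) = a i := by
        rw [List.getElem_of_eq hx2, List.getElem_append_right (le_refl u.length)]
        simp
      have h0 : c u.length = a i := (getx u.length (by omega)).symm.trans h1
      have h3 : x[u.length + (j + 1)]'(by omega) = a l := by
        rw [List.getElem_of_eq hx2,
          List.getElem_append_right (by omega : u.length ≤ u.length + (j + 1))]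
        simp only [Nat.add_sub_cancel_left]
        rw [List.getElem_append_left (by simp)]
        rw [List.getElem_cons_succ]
        rw [List.getElem_append_right (by simp)]
        simp
      have h2 : c (u.length + (j + 1)) = a l := (getx _ (by omega)).symm.trans h3
      obtain ⟨hseq, hslt⟩ := hdecode u.length i hi2 hiσ h0
      obtain ⟨hqeq, hqlt⟩ := hdecode (u.length + (j + 1)) l (by omega) hlσ h2
      have hlt : i - 2 < l - 2 := by
        by_contra hcon
        push_neg at hcon
        have := Nat.mul_le_mul_right (k + 1) hcon
        omega
      have hle2 : l - 2 ≤ i - 1 := by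
        by_contra hcon
        push_neg at hcon
        have h5 : (i - 2) + 2 ≤ l - 2 := by omega
        have := Nat.mul_le_mul_right (k + 1) h5
        rw [Nat.add_mul] at this
        omega
      have hl2 : l - 2 = i - 1 := by omega
      have e2 : (l - 2) * (k + 1) = (i - 2) * (k + 1) + (k + 1) := by
        rw [hl2, show i - 1 = (i - 2) + 1 by omega, Nat.add_mul, one_mul]
      have hjk : j = k := by omega
      have hli : l = i + 1 := by omega
      have hiσ' : i < σ := by
        have h6 : (l - 2) * (k + 1) < (σ - 1) * (k + 1) := by omega
        have h7 := lt_of_mul_lt_mul_right h6 (Nat.zero_le (k + 1))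
        omega
      exact hcond ⟨hjk, hli, hiσ'⟩
    · -- minimality
      intro v hv hne
      rw [occ_pos_iff]
      rcases infix_tail_or_dropLast hv hne with h | h
      · simp only [List.tail_cons] at h
        refine h.trans ?_
        have hP := hPair (l - 3) (by omega)
        rw [hB] at hP
        simp only at hP
        rw [show l - 3 + 2 = l - 1 by omega, show l - 3 + 1 + 2 = l by omega] at hP
        refine List.IsInfix.trans ?_ hP
        refine ⟨a (l - 1) :: List.replicate (k - j) (a 1), List.replicate k (a 1), ?_⟩
        simp only [List.cons_append, List.append_assoc, List.singleton_append]
        rw [← hrep]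
        simp only [List.append_assoc, List.nil_append]
      · have hdl : (a i :: (List.replicate j (a 1) ++ [a l])).dropLast
            = a i :: List.replicate j (a 1) := by
          rw [show a i :: (List.replicate j (a 1) ++ [a l])
              = (a i :: List.replicate j (a 1)) ++ [a l] by simp, List.dropLast_concat]
        rw [hdl] at h
        refine h.trans ?_
        have hBl := hBlk (i - 2) (by omega)
        rw [hB] at hBl
        simp only at hBl
        rw [show i - 2 + 2 = i by omega] at hBl
        refine List.IsInfix.trans ?_ hBl
        refine ⟨[], List.replicate (k - j) (a 1), ?_⟩
        simp only [List.nil_append, List.cons_append, List.append_assoc]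
        rw [hrep']
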